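/- Let (W,S) be a Coxeter system, J ⊂ S with ^J W the minimal-length representatives of W_J \ W, and N the right H-module ε_J^- H with basis N_σ = ε_J^- H_σ for σ ∈ ^J W. Then for σ ∈ ^J W and s ∈ S: N_σ H_s = N_{σs} if σs ∈ ^J W and σs > σ; N_σ H_s = N_{σs} + (τ − τ^{-1}) N_σ if σs ∈ ^J W and σs < σ; and N_σ H_s = −τ^{-1} N_σ if σs ∉ ^J W. -/

import Mathlib

/-- The parameter τ in ℤ[τ,τ⁻¹]. -/
noncomputable def τ : LaurentPolynomial ℤ := LaurentPolynomial.T 1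

/-- The parameter τ⁻¹. -/
noncomputable def τi : LaurentPolynomial ℤ := LaurentPolynomial.T (-1)

namespace Stmt19Aux

open CoxeterSystem List

attribute [local instance] Classical.propDecidable

section AbstractGroup

variable {G : Type*} [Group G]

lemma conj_eq_iff (a b c t : G) : a * t * b = c ↔ t = a⁻¹ * c * b⁻¹ := by
  constructor
  · intro h; rw [← h]; group
  · intro h; rw [h]; group

lemma comm_pow {r x : G} (h : r * x = x⁻¹ * r) (m : ℕ) :
    r * x ^ m = (x ^ m)⁻¹ * r := by
  induction m with
  | zero => simp
  | succ m ih =>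
    calc r * x ^ (m+1) = (r * x ^ m) * x := by rw [pow_succ]; group
      _ = (x ^ m)⁻¹ * (r * x) := by rw [ih]; group
      _ = (x ^ m)⁻¹ * (x⁻¹ * r) := by rw [h]
      _ = (x ^ (m+1))⁻¹ * r := by rw [pow_succ]; group

lemma abstract_conda {r x : G} (h : r * x = x⁻¹ * r) (k : ℕ) (t : G) :
    (x ^ k * t * (x⁻¹) ^ k = r) ↔ t = r * x ^ (2 * k) := by
  rw [conj_eq_iff]
  have e1 : (x ^ k)⁻¹ * r * ((x⁻¹) ^ k)⁻¹ = r * x ^ (2 * k) := by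
    calc (x ^ k)⁻¹ * r * ((x⁻¹) ^ k)⁻¹ = (x ^ k)⁻¹ * (r * x ^ k) := by group
      _ = (x ^ k)⁻¹ * ((x ^ k)⁻¹ * r) := by rw [comm_pow h]
      _ = (x ^ k * x ^ k)⁻¹ * r := by group
      _ = (x ^ (2*k))⁻¹ * r := by rw [two_mul, pow_add]
      _ = r * x ^ (2*k) := by exact (comm_pow h _).symm
  rw [e1]

lemma abstract_condb {r x c : G} (h : r * x = x⁻¹ * r) (hr : r * r = 1) (hc : c = x * r⁻¹)
    (k : ℕ) (t : G) :
    (r * (x ^ k * t * (x⁻¹) ^ k) * r⁻¹ = c) ↔ t = r * x ^ (2 * k + 1) := by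
  have hrinv : r⁻¹ = r := by
    rw [← mul_one r⁻¹, ← hr]; group
  subst hc
  rw [conj_eq_iff r r⁻¹, conj_eq_iff]
  have e2 : (x ^ k)⁻¹ * (r * (x * r) * r) * x ^ k = r * x ^ (2 * k + 1) := by
    calc (x ^ k)⁻¹ * (r * (x * r) * r) * x ^ k
        = (x ^ k)⁻¹ * ((r * x) * (r * r) * x ^ k) := by group
      _ = (x ^ k)⁻¹ * (x⁻¹ * (r * x ^ k)) := by rw [h, hr]; group
      _ = (x ^ k)⁻¹ * (x⁻¹ * ((x ^ k)⁻¹ * r)) := by rw [comm_pow h]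
      _ = (x ^ k * x ^ 1 * x ^ k)⁻¹ * r := by group
      _ = (x ^ (2*k+1))⁻¹ * r := by rw [← pow_add, ← pow_add, show k + 1 + k = 2*k+1 by omega]
      _ = r * x ^ (2*k+1) := by exact (comm_pow h _).symm
  simp only [hrinv]
  rw [show ((x⁻¹)^k)⁻¹ = x ^ k by group, e2]

end AbstractGroup

variable {B W : Type*} [Group W] {M : CoxeterMatrix B} (cs : CoxeterSystem M W)

/-- The basic sign-flipping involution on `W × ℤˣ`. -/
noncomputable def fFun (i : B) : W × ℤˣ → W × ℤˣ :=
  fun p => (cs.simple i * p.1 * (cs.simple i)⁻¹, if p.1 = cs.simple i then -p.2 else p.2)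

lemma fFun_invol (i : B) : Function.Involutive (fFun cs i) := by
  rintro ⟨t, z⟩
  simp only [fFun]
  have h1 : cs.simple i * (cs.simple i * t * (cs.simple i)⁻¹) * (cs.simple i)⁻¹ = t := by
    rw [cs.inv_simple]
    calc cs.simple i * (cs.simple i * t * cs.simple i) * cs.simple i
        = (cs.simple i * cs.simple i) * t * (cs.simple i * cs.simple i) := by group
      _ = t := by rw [cs.simple_mul_simple_self]; group
  have h2 : (cs.simple i * t * (cs.simple i)⁻¹ = cs.simple i) ↔ t = cs.simple i := by
    rw [conj_eq_iff]
    constructor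
    · intro h; rw [h]; group
    · intro h; rw [h]; group
  ext
  · exact h1
  · simp only [h2]
    split_ifs <;> simp

/-- The sign-flipping involution as a permutation. -/
noncomputable def fPerm (i : B) : Equiv.Perm (W × ℤˣ) := (fFun_invol cs i).toPerm

@[simp] lemma fPerm_apply (i : B) (p : W × ℤˣ) : fPerm cs i p = fFun cs i p := rfl

lemma simple_comm (i i' : B) :
    cs.simple i' * (cs.simple i * cs.simple i')
      = (cs.simple i * cs.simple i')⁻¹ * cs.simple i' := by
  rw [mul_inv_rev, cs.inv_simple, cs.inv_simple]
  group

lemma fPerm_mul_pow_apply (i i' : B) (k : ℕ) (t : W) (z : ℤˣ) :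
    ((fPerm cs i * fPerm cs i') ^ k) (t, z) =
      ((cs.simple i * cs.simple i') ^ k * t * ((cs.simple i * cs.simple i')⁻¹) ^ k,
        (∏ a ∈ Finset.range k,
          ((if t = cs.simple i' * (cs.simple i * cs.simple i') ^ (2*a+1) then (-1 : ℤˣ) else 1) *
           (if t = cs.simple i' * (cs.simple i * cs.simple i') ^ (2*a) then (-1 : ℤˣ) else 1))) * z)
    := by
  induction k with
  | zero => simp
  | succ k ih =>
    rw [pow_succ' (fPerm cs i * fPerm cs i') k, Equiv.Perm.mul_apply, ih,
      Equiv.Perm.mul_apply, fPerm_apply, fPerm_apply]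
    simp only [fFun, Prod.mk.injEq]
    have hcomm := simple_comm cs i i'
    have hcondb : (cs.simple i' * ((cs.simple i * cs.simple i') ^ k * t *
          ((cs.simple i * cs.simple i')⁻¹) ^ k) * (cs.simple i')⁻¹ = cs.simple i)
        ↔ t = cs.simple i' * (cs.simple i * cs.simple i') ^ (2 * k + 1) := by
      exact abstract_condb hcomm (cs.simple_mul_simple_self i')
        (by rw [cs.inv_simple, mul_assoc, cs.simple_mul_simple_self, mul_one]) k t
    constructor
    · rw [cs.inv_simple, cs.inv_simple, pow_succ' (cs.simple i * cs.simple i') k,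
        pow_succ ((cs.simple i * cs.simple i')⁻¹) k]
      rw [show ((cs.simple i * cs.simple i')⁻¹ : W)
          = cs.simple i' * cs.simple i by rw [mul_inv_rev, cs.inv_simple, cs.inv_simple]]
      group
    · rw [Finset.prod_range_succ]
      simp only [abstract_conda hcomm k t, hcondb]
      split_ifs <;> simp [mul_assoc]

lemma isLiftable : M.IsLiftable (fPerm cs) := by
  intro i i'
  apply Equiv.ext
  rintro ⟨t, z⟩
  rw [show ((1 : Equiv.Perm (W × ℤˣ))) (t, z) = (t, z) from rfl, fPerm_mul_pow_apply]
  have hsplit : ∀ k : ℕ, (∏ a ∈ Finset.range k,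
      ((if t = cs.simple i' * (cs.simple i * cs.simple i') ^ (2*a+1) then (-1 : ℤˣ) else 1) *
       (if t = cs.simple i' * (cs.simple i * cs.simple i') ^ (2*a) then (-1 : ℤˣ) else 1)))
      = ∏ c ∈ Finset.range (2*k),
          (if t = cs.simple i' * (cs.simple i * cs.simple i') ^ c then (-1 : ℤˣ) else 1) := by
    intro k
    induction k with
    | zero => simp
    | succ k ih =>
      rw [Finset.prod_range_succ, ih, show 2*(k+1) = (2*k+1)+1 by omega,
        Finset.prod_range_succ, Finset.prod_range_succ, ← mul_assoc, mul_right_comm]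
  rw [hsplit]
  have hper : (cs.simple i * cs.simple i') ^ (M i i') = 1 := cs.simple_mul_simple_pow i i'
  have hdouble : (∏ c ∈ Finset.range (2 * M i i'),
      (if t = cs.simple i' * (cs.simple i * cs.simple i') ^ c then (-1 : ℤˣ) else 1)) = 1 := by
    rw [two_mul, Finset.prod_range_add]
    have heq : ∀ c, (if t = cs.simple i' * (cs.simple i * cs.simple i') ^ (M i i' + c)
        then (-1 : ℤˣ) else 1)
        = (if t = cs.simple i' * (cs.simple i * cs.simple i') ^ c then (-1 : ℤˣ) else 1) := by
      intro c
      rw [pow_add, hper, one_mul]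
    simp only [heq]
    rw [← sq, Int.units_sq]
  rw [hdouble, one_mul, hper]
  have hper' : ((cs.simple i * cs.simple i')⁻¹) ^ (M i i') = 1 := by
    rw [inv_pow, hper, inv_one]
  rw [hper']
  simp

/-- The sign representation of `W` on `W × ℤˣ`. -/
noncomputable def phi : W →* Equiv.Perm (W × ℤˣ) := cs.lift ⟨fPerm cs, isLiftable cs⟩

lemma phi_simple (i : B) : phi cs (cs.simple i) = fPerm cs i :=
  cs.lift_apply_simple (isLiftable cs) i

/-- Sign associated to a word and an element. -/
noncomputable def riSign (ω : List B) (t : W) : ℤˣ :=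
  ((cs.rightInvSeq ω).map (fun u => if t = u then (-1 : ℤˣ) else 1)).prod

lemma phi_wordProd (ω : List B) (t : W) (z : ℤˣ) :
    phi cs (cs.wordProd ω) (t, z)
      = (cs.wordProd ω * t * (cs.wordProd ω)⁻¹, riSign cs ω t * z) := by
  induction ω with
  | nil => simp [riSign]
  | cons i ω ih =>
    rw [cs.wordProd_cons, map_mul, Equiv.Perm.mul_apply, ih, phi_simple, fPerm_apply]
    simp only [fFun]
    have hris : cs.rightInvSeq (i :: ω)
        = ((cs.wordProd ω)⁻¹ * cs.simple i * cs.wordProd ω) :: cs.rightInvSeq ω := rfl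
    have hcond : (cs.wordProd ω * t * (cs.wordProd ω)⁻¹ = cs.simple i)
        ↔ t = (cs.wordProd ω)⁻¹ * cs.simple i * cs.wordProd ω := by
      rw [conj_eq_iff, inv_inv]
    rw [Prod.ext_iff]
    constructor
    · show cs.simple i * (cs.wordProd ω * t * (cs.wordProd ω)⁻¹) * (cs.simple i)⁻¹
        = (cs.simple i * cs.wordProd ω) * t * (cs.simple i * cs.wordProd ω)⁻¹
      group
    · show (if cs.wordProd ω * t * (cs.wordProd ω)⁻¹ = cs.simple i
          then -(riSign cs ω t * z) else riSign cs ω t * z) = riSign cs (i :: ω) t * z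
      rw [hcond]
      unfold riSign
      rw [hris, List.map_cons, List.prod_cons]
      split_ifs <;> simp [mul_assoc]

/-- The sign of `t` under the action of `w`. -/
noncomputable def sgn (w t : W) : ℤˣ := (phi cs w (t, 1)).2

lemma phi_apply (w t : W) (z : ℤˣ) :
    phi cs w (t, z) = (w * t * w⁻¹, sgn cs w t * z) := by
  obtain ⟨ω, _, rfl⟩ := cs.exists_reduced_word w
  rw [phi_wordProd]
  unfold sgn
  rw [phi_wordProd, mul_one]

lemma sgn_eq_riSign (ω : List B) (t : W) : sgn cs (cs.wordProd ω) t = riSign cs ω t := by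
  unfold sgn
  rw [phi_wordProd, mul_one]

lemma sgn_mul (u v t : W) :
    sgn cs (u * v) t = sgn cs u (v * t * v⁻¹) * sgn cs v t := by
  have h : phi cs (u * v) (t, 1) = phi cs u (phi cs v (t, 1)) := by
    rw [map_mul, Equiv.Perm.mul_apply]
  rw [phi_apply, phi_apply, phi_apply] at h
  have h2 := congrArg Prod.snd h
  simp only [mul_one] at h2
  exact h2

lemma sgn_refl_self {t : W} (ht : cs.IsReflection t) : sgn cs t t = -1 := by
  obtain ⟨u, i, rfl⟩ := ht
  have key : sgn cs u⁻¹ (u * (cs.simple i * u⁻¹)) * sgn cs u (cs.simple i) = 1 := by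
    have h2 : phi cs u⁻¹ (phi cs u (cs.simple i, 1)) = (cs.simple i, 1) := by
      rw [← Equiv.Perm.mul_apply, ← map_mul, inv_mul_cancel, map_one, Equiv.Perm.one_apply]
    rw [phi_apply, phi_apply] at h2
    have h3 := congrArg Prod.snd h2
    simp only [mul_one] at h3
    rw [show u * cs.simple i * u⁻¹ = u * (cs.simple i * u⁻¹) by group] at h3
    exact h3
  have s1 : phi cs u⁻¹ (u * (cs.simple i * u⁻¹), 1)
      = (cs.simple i, sgn cs u⁻¹ (u * (cs.simple i * u⁻¹))) := by
    rw [phi_apply, mul_one,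
      show u⁻¹ * (u * (cs.simple i * u⁻¹)) * u⁻¹⁻¹ = cs.simple i by group]
  have s2 : phi cs (cs.simple i)
        (cs.simple i, sgn cs u⁻¹ (u * (cs.simple i * u⁻¹)))
      = (cs.simple i, -(sgn cs u⁻¹ (u * (cs.simple i * u⁻¹)))) := by
    rw [phi_simple, fPerm_apply]
    simp only [fFun]
    rw [show cs.simple i * cs.simple i * (cs.simple i)⁻¹ = cs.simple i by group]
    simp
  unfold sgn
  rw [show u * cs.simple i * u⁻¹ = u * (cs.simple i * u⁻¹) by group,
    map_mul, map_mul, Equiv.Perm.mul_apply, Equiv.Perm.mul_apply, s1, s2, phi_apply]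
  show sgn cs u (cs.simple i) * -(sgn cs u⁻¹ (u * (cs.simple i * u⁻¹))) = -1
  rw [mul_neg, mul_comm, key]

lemma riSign_eq_one_of_not_mem (ω : List B) (t : W) (h : t ∉ cs.rightInvSeq ω) :
    riSign cs ω t = 1 := by
  unfold riSign
  apply List.prod_eq_one
  intro x hx
  obtain ⟨u, hu, rfl⟩ := List.mem_map.mp hx
  rw [if_neg]
  rintro rfl
  exact h hu

lemma length_lt_of_sgn_neg {w t : W} (h : sgn cs w t = -1) :
    cs.length (w * t) < cs.length w := by
  obtain ⟨ω, hlen, rfl⟩ := cs.exists_reduced_word w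
  have hred : cs.IsReduced ω := hlen
  have hmem : t ∈ cs.rightInvSeq ω := by
    by_contra hmem
    rw [sgn_eq_riSign, riSign_eq_one_of_not_mem cs ω t hmem] at h
    exact absurd h (by decide)
  exact (cs.isRightInversion_of_mem_rightInvSeq hred hmem).2

lemma sgn_neg_of_length_lt {w t : W} (ht : cs.IsReflection t)
    (h : cs.length (w * t) < cs.length w) : sgn cs w t = -1 := by
  rcases Int.units_eq_one_or (sgn cs w t) with h1 | h1
  · exfalso
    have h2 : sgn cs (w * t) t = -1 := by
      rw [sgn_mul, show t * t * t⁻¹ = t by rw [mul_assoc, mul_inv_cancel, mul_one],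
        sgn_refl_self cs ht, h1, one_mul]
    have h3 := length_lt_of_sgn_neg cs h2
    rw [mul_assoc, ht.mul_self, mul_one] at h3
    omega
  · exact h1

/-- Strong exchange property (membership form). -/
lemma mem_rightInvSeq_of_isRightInversion {ω : List B} (hred : cs.IsReduced ω) {t : W}
    (ht : cs.IsReflection t) (h : cs.length (cs.wordProd ω * t) < cs.length (cs.wordProd ω)) :
    t ∈ cs.rightInvSeq ω := by
  have hs := sgn_neg_of_length_lt cs ht h
  rw [sgn_eq_riSign] at hs
  by_contra hmem
  rw [riSign_eq_one_of_not_mem cs ω t hmem] at hs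
  exact absurd hs (by decide)

/-- Deodhar's lemma. -/
lemma deodhar (j s : B) (σ : W)
    (h1 : cs.length σ < cs.length (cs.simple j * σ))
    (h3 : cs.length σ < cs.length (σ * cs.simple s))
    (h2 : cs.length (cs.simple j * (σ * cs.simple s)) < cs.length (σ * cs.simple s)) :
    cs.simple j * σ = σ * cs.simple s := by
  obtain ⟨ω, hlen, hw⟩ := cs.exists_reduced_word σ
  have hlen : ω.length = cs.length σ := by rw [hw]; exact hlen.symm
  have hlv : cs.length (σ * cs.simple s) = cs.length σ + 1 := by
    rcases cs.length_mul_simple σ s with h | h <;> omega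
  have hword : (σ * cs.simple s)⁻¹ = cs.wordProd (s :: ω.reverse) := by
    rw [cs.wordProd_cons, cs.wordProd_reverse, ← hw, mul_inv_rev, cs.inv_simple]
  have hred : cs.IsReduced (s :: ω.reverse) := by
    unfold CoxeterSystem.IsReduced
    rw [← hword, cs.length_inv, hlv, List.length_cons, List.length_reverse]
    omega
  have hinvlen : cs.length (cs.wordProd (s :: ω.reverse) * cs.simple j)
      < cs.length (cs.wordProd (s :: ω.reverse)) := by
    rw [← hword, cs.length_inv,
      show (σ * cs.simple s)⁻¹ * cs.simple j = (cs.simple j * (σ * cs.simple s))⁻¹ by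
        simp [mul_inv_rev, cs.inv_simple, mul_assoc],
      cs.length_inv]
    exact h2
  have hmem : cs.simple j ∈ cs.rightInvSeq (s :: ω.reverse) :=
    mem_rightInvSeq_of_isRightInversion cs hred (cs.isReflection_simple j) hinvlen
  have hris : cs.rightInvSeq (s :: ω.reverse)
      = ((cs.wordProd ω.reverse)⁻¹ * cs.simple s * cs.wordProd ω.reverse)
          :: cs.rightInvSeq ω.reverse := rfl
  rw [hris, List.mem_cons] at hmem
  rcases hmem with heq | hmem'
  · rw [cs.wordProd_reverse, ← hw, inv_inv] at heq
    rw [heq]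
    group
  · exfalso
    have hredω : cs.IsReduced ω := by
      unfold CoxeterSystem.IsReduced
      rw [← hw, hlen]
    have hred' : cs.IsReduced ω.reverse := (cs.isReduced_reverse_iff ω).mpr hredω
    have hlt := (cs.isRightInversion_of_mem_rightInvSeq hred' hmem').2
    rw [cs.wordProd_reverse, ← hw,
      show σ⁻¹ * cs.simple j = (cs.simple j * σ)⁻¹ by
        simp [mul_inv_rev, cs.inv_simple],
      cs.length_inv, cs.length_inv] at hlt
    omega

end Stmt19Aux

/-- In the right module N = ε_J⁻ H with basis N_σ = ε_J⁻ H_σ for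
σ ∈ ^J W (minimal-length representatives of W_J\W), one has, for σ ∈ ^J W and s ∈ S:
N_σ H_s = N_{σs} if σs ∈ ^J W, σs > σ;
N_σ H_s = N_{σs} + (τ − τ⁻¹) N_σ if σs ∈ ^J W, σs < σ;
N_σ H_s = −τ⁻¹ N_σ if σs ∉ ^J W.
The antisymmetrizer property ε_J⁻ H_{s_j} = (−τ⁻¹) ε_J⁻ for j ∈ J is assumed, and
`σs ∈ ^J W` is expressed by the length characterization ℓ(s_j(σs)) > ℓ(σs) for j ∈ J. -/
theorem stmt_19 {B W : Type*} [Group W] {M : CoxeterMatrix B} (cs : CoxeterSystem M W)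
    (A : Type*) [Ring A] [Algebra (LaurentPolynomial ℤ) A]
    (H : W → A)
    (hbraid : ∀ w w' : W, cs.length (w * w') = cs.length w + cs.length w' →
      H (w * w') = H w * H w')
    (hquad : ∀ b : B,
      (H (cs.simple b) - algebraMap (LaurentPolynomial ℤ) A τ) *
        (H (cs.simple b) + algebraMap (LaurentPolynomial ℤ) A τi) = 0)
    (J : Set B)
    (ε : A)
    (hε : ∀ j ∈ J, ε * H (cs.simple j) = (-τi) • ε)
    (σ : W)
    (hσ : ∀ j ∈ J, cs.length (cs.simple j * σ) > cs.length σ)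
    (s : B) :
    ((∀ j ∈ J, cs.length (cs.simple j * (σ * cs.simple s)) > cs.length (σ * cs.simple s)) →
      cs.length (σ * cs.simple s) > cs.length σ →
      (ε * H σ) * H (cs.simple s) = ε * H (σ * cs.simple s)) ∧
    ((∀ j ∈ J, cs.length (cs.simple j * (σ * cs.simple s)) > cs.length (σ * cs.simple s)) →
      cs.length (σ * cs.simple s) < cs.length σ →
      (ε * H σ) * H (cs.simple s) =
        ε * H (σ * cs.simple s) + (τ - τi) • (ε * H σ)) ∧
    (¬ (∀ j ∈ J, cs.length (cs.simple j * (σ * cs.simple s)) > cs.length (σ * cs.simple s)) →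
      (ε * H σ) * H (cs.simple s) = (-τi) • (ε * H σ)) := by
  refine ⟨?_, ?_, ?_⟩
  · -- Case 1 : σs ∈ ^J W and σs > σ
    intro _ hgt
    have hl : cs.length (σ * cs.simple s) = cs.length σ + cs.length (cs.simple s) := by
      rw [cs.length_simple]
      rcases cs.length_mul_simple σ s with h | h <;> omega
    rw [hbraid σ (cs.simple s) hl, mul_assoc]
  · -- Case 2 : σs ∈ ^J W and σs < σ
    intro _ hlt
    have hvs : (σ * cs.simple s) * cs.simple s = σ := by
      rw [mul_assoc, cs.simple_mul_simple_self, mul_one]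
    have hl : cs.length ((σ * cs.simple s) * cs.simple s)
        = cs.length (σ * cs.simple s) + cs.length (cs.simple s) := by
      rw [cs.length_simple, hvs]
      rcases cs.length_mul_simple σ s with h | h <;> omega
    have hHσ : H σ = H (σ * cs.simple s) * H (cs.simple s) := by
      rw [← hbraid _ _ hl, hvs]
    -- the quadratic relation in the form H_s² = (τ - τ⁻¹)·H_s + 1
    have hττ : (τ * τi : LaurentPolynomial ℤ) = 1 := by
      unfold τ τi
      rw [← LaurentPolynomial.T_add, show (1 + -1 : ℤ) = 0 by ring, LaurentPolynomial.T_zero]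
    have hq : H (cs.simple s) * H (cs.simple s)
        = algebraMap (LaurentPolynomial ℤ) A (τ - τi) * H (cs.simple s) + 1 := by
      have h0 := hquad s
      rw [sub_mul, mul_add, mul_add] at h0
      have h1 := sub_eq_zero.mp h0
      have h2 := eq_sub_of_add_eq h1
      rw [h2, ← map_mul, hττ, map_one, (Algebra.commutes τi (H (cs.simple s))).symm,
        map_sub, sub_mul]
      abel
    have hmove : H (σ * cs.simple s) *
          (algebraMap (LaurentPolynomial ℤ) A (τ - τi) * H (cs.simple s))
        = algebraMap (LaurentPolynomial ℤ) A (τ - τi) *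
            (H (σ * cs.simple s) * H (cs.simple s)) := by
      rw [← mul_assoc, ← Algebra.commutes, mul_assoc]
    calc (ε * H σ) * H (cs.simple s)
        = ε * (H (σ * cs.simple s) * (H (cs.simple s) * H (cs.simple s))) := by
          rw [hHσ, mul_assoc, mul_assoc]
      _ = ε * (algebraMap (LaurentPolynomial ℤ) A (τ - τi) * H σ + H (σ * cs.simple s)) := by
          rw [hq, mul_add, mul_one, hmove, ← hHσ]
      _ = ε * H (σ * cs.simple s) + (τ - τi) • (ε * H σ) := by
          rw [mul_add, Algebra.smul_def, ← mul_assoc, ← Algebra.commutes, mul_assoc, add_comm]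
  · -- Case 3 : σs ∉ ^J W
    intro hns
    push_neg at hns
    obtain ⟨j, hjJ, hj⟩ := hns
    have hjlt : cs.length (cs.simple j * (σ * cs.simple s)) < cs.length (σ * cs.simple s) :=
      lt_of_le_of_ne hj (cs.length_simple_mul_ne (σ * cs.simple s) j)
    have hσj := hσ j hjJ
    have hup : cs.length (cs.simple j * σ) = cs.length σ + 1 := by
      rcases cs.length_simple_mul σ j with h | h <;> omega
    have hassoc : cs.simple j * (σ * cs.simple s) = (cs.simple j * σ) * cs.simple s :=
      (mul_assoc _ _ _).symm
    have h3 : cs.length (σ * cs.simple s) = cs.length σ + 1 := by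
      rcases cs.length_mul_simple σ s with h | h
      · exact h
      · exfalso
        rw [hassoc] at hjlt
        rcases cs.length_mul_simple (cs.simple j * σ) s with h' | h' <;> omega
    have hdeo : cs.simple j * σ = σ * cs.simple s :=
      Stmt19Aux.deodhar cs j s σ hσj (by omega) hjlt
    have hb1 : H (σ * cs.simple s) = H σ * H (cs.simple s) :=
      hbraid σ _ (by rw [cs.length_simple]; omega)
    have hb2 : H (cs.simple j * σ) = H (cs.simple j) * H σ :=
      hbraid _ _ (by rw [cs.length_simple]; omega)
    calc (ε * H σ) * H (cs.simple s)
        = ε * H (σ * cs.simple s) := by rw [hb1, mul_assoc]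
      _ = ε * H (cs.simple j * σ) := by rw [hdeo]
      _ = (ε * H (cs.simple j)) * H σ := by rw [hb2, mul_assoc]
      _ = (-τi) • (ε * H σ) := by rw [hε j hjJ, smul_mul_assoc]
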